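/- Let Q = T[H_1, ..., H_t] be a strongly connected semicomplete composition. If T has a strict 3-king and every 2-king of T is dominated by some strict 3-king of T, then there exists a semicomplete composition Q' containing Q as an induced subdigraph such that the set of all 3-kings of Q' is exactly V(Q). -/
import Mathlib


/-- There is a directed walk (equivalently, path) of length at most `k` from `x` to `y`. -/
def KReach {V : Type*} (A : V → V → Prop) (k : ℕ) (x y : V) : Prop :=
  ∃ n : ℕ, n ≤ k ∧ ∃ f : ℕ → V, f 0 = x ∧ f n = y ∧ ∀ i < n, A (f i) (f (i + 1))

/-- `x` is a `k`-king: it reaches every vertex by a path of length at most `k`. -/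
def IsKKing {V : Type*} (A : V → V → Prop) (k : ℕ) (x : V) : Prop :=
  ∀ y : V, KReach A k x y

/-- A strict `k`-king: a `k`-king with some vertex at distance exactly `k`. -/
def IsStrictKKing {V : Type*} (A : V → V → Prop) (k : ℕ) (x : V) : Prop :=
  IsKKing A k x ∧ ∃ y : V, ¬ KReach A (k - 1) x y

/-- Strong connectivity of a digraph. -/
def Strong {V : Type*} (A : V → V → Prop) : Prop :=
  ∀ x y : V, ∃ k : ℕ, KReach A k x y

/-- Semicomplete digraph: at least one arc between any two distinct vertices. -/
def Semicomplete {V : Type*} (A : V → V → Prop) : Prop :=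
  ∀ x y : V, x ≠ y → A x y ∨ A y x

/-- Tournament: exactly one arc between any two distinct vertices, no loops. -/
def IsTournament {V : Type*} (A : V → V → Prop) : Prop :=
  Irreflexive A ∧ ∀ x y : V, x ≠ y → (A x y ↔ ¬ A y x)

/-- Out-degree of a vertex. -/
noncomputable def outDeg {V : Type*} (A : V → V → Prop) (x : V) : ℕ :=
  Set.ncard {y | A x y}

/-- There is a directed cycle of length exactly `k` through `x`. -/
def CycleThrough {V : Type*} (A : V → V → Prop) (k : ℕ) (x : V) : Prop :=
  ∃ f : ℕ → V, f 0 = x ∧ f k = x ∧ (∀ i < k, A (f i) (f (i + 1))) ∧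
    ∀ i j, i < k → j < k → f i = f j → i = j

/-- `x` belongs to a directed cycle of length at most `k`. -/
def OnShortCycle {V : Type*} (A : V → V → Prop) (k : ℕ) (x : V) : Prop :=
  ∃ n : ℕ, 2 ≤ n ∧ n ≤ k ∧ CycleThrough A n x

/-- `AQ` (on `W`) is the composition `T[H_1, …, H_t]` of digraphs over the digraph `AT`
(on index type `ι`), where the fiber of `π` over `i` is the vertex set of `H_i`
(each fiber is nonempty since `π` is surjective), the arcs of `H_i` are the arcs of
`AQ` inside the fiber over `i`, and arcs between different fibers are determined by `AT`. -/
structure IsComposition {ι W : Type*} (AT : ι → ι → Prop) (AQ : W → W → Prop)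
    (π : W → ι) : Prop where
  surj : Function.Surjective π
  cross : ∀ x y : W, π x ≠ π y → (AQ x y ↔ AT (π x) (π y))

/-- The digraph `H_i`: the induced subdigraph on the fiber of `π` over `i`. -/
def FiberArc {ι W : Type*} (AQ : W → W → Prop) (π : W → ι) (i : ι) :
    {w : W // π w = i} → {w : W // π w = i} → Prop :=
  fun a b => AQ a.1 b.1

/-- The induced subdigraph on the vertices satisfying `P`. -/
def DelArc {V : Type*} (A : V → V → Prop) (P : V → Prop) :
    {v : V // P v} → {v : V // P v} → Prop :=
  fun a b => A a.1 b.1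

/-- `{v}` is a `k`-absorbent set: every other vertex reaches `v` in at most `k` steps. -/
def SingletonAbsorbent {V : Type*} (A : V → V → Prop) (k : ℕ) (v : V) : Prop :=
  ∀ x : V, x ≠ v → KReach A k x v

/-- A quasi-kernel: an independent set `K` such that every vertex outside `K`
reaches some vertex of `K` by a path of length at most 2. -/
def QuasiKernel {V : Type*} (A : V → V → Prop) (K : Set V) : Prop :=
  (∀ x ∈ K, ∀ y ∈ K, x ≠ y → ¬ A x y) ∧ ∀ x ∉ K, ∃ y ∈ K, KReach A 2 x y

/-- A `k`-kernel: a `k`-independent and `(k-1)`-absorbent set. -/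
def KKernel {V : Type*} (A : V → V → Prop) (k : ℕ) (K : Set V) : Prop :=
  (∀ x ∈ K, ∀ y ∈ K, x ≠ y → ¬ KReach A (k - 1) x y) ∧
    ∀ x ∉ K, ∃ y ∈ K, KReach A (k - 1) x y


section KingAux

/-! ### Basic `KReach` lemmas -/

lemma kreach_refl {V : Type*} {A : V → V → Prop} {k : ℕ} (x : V) : KReach A k x x :=
  ⟨0, Nat.zero_le _, fun _ => x, rfl, rfl, fun i hi => absurd hi (Nat.not_lt_zero i)⟩

lemma kreach_one {V : Type*} {A : V → V → Prop} {x y : V} (h : A x y) {k : ℕ}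
    (hk : 1 ≤ k) : KReach A k x y := by
  refine ⟨1, hk, fun i => if i = 0 then x else y, by simp, by simp, ?_⟩
  intro i hi
  have hi0 : i = 0 := by omega
  subst hi0
  simpa using h

lemma kreach_two {V : Type*} {A : V → V → Prop} {x a y : V} (h1 : A x a) (h2 : A a y)
    {k : ℕ} (hk : 2 ≤ k) : KReach A k x y := by
  refine ⟨2, hk, fun i => if i = 0 then x else if i = 1 then a else y, by simp, by simp, ?_⟩
  intro i hi
  interval_cases i
  · simpa using h1
  · simpa using h2

lemma kreach_three {V : Type*} {A : V → V → Prop} {x a b y : V} (h1 : A x a) (h2 : A a b)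
    (h3 : A b y) {k : ℕ} (hk : 3 ≤ k) : KReach A k x y := by
  refine ⟨3, hk, fun i => if i = 0 then x else if i = 1 then a else if i = 2 then b else y,
    by simp, by simp, ?_⟩
  intro i hi
  interval_cases i
  · simpa using h1
  · simpa using h2
  · simpa using h3

lemma kreach_le2_cases {V : Type*} {A : V → V → Prop} {x y : V} (h : KReach A 2 x y) :
    x = y ∨ A x y ∨ (∃ a, A x a ∧ A a y) := by
  obtain ⟨n, hn, f, h0, h1, harc⟩ := h
  interval_cases n
  · exact Or.inl (h0.symm.trans h1)
  · refine Or.inr (Or.inl ?_)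
    have := harc 0 (by norm_num)
    rwa [h0, h1] at this
  · refine Or.inr (Or.inr ⟨f 1, ?_, ?_⟩)
    · have := harc 0 (by norm_num); rwa [h0] at this
    · have := harc 1 (by norm_num); rwa [h1] at this

lemma kreach_le3_cases {V : Type*} {A : V → V → Prop} {x y : V} (h : KReach A 3 x y) :
    x = y ∨ A x y ∨ (∃ a, A x a ∧ A a y) ∨ (∃ a b, A x a ∧ A a b ∧ A b y) := by
  obtain ⟨n, hn, f, h0, h1, harc⟩ := h
  interval_cases n
  · exact Or.inl (h0.symm.trans h1)
  · refine Or.inr (Or.inl ?_)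
    have := harc 0 (by norm_num)
    rwa [h0, h1] at this
  · refine Or.inr (Or.inr (Or.inl ⟨f 1, ?_, ?_⟩))
    · have := harc 0 (by norm_num); rwa [h0] at this
    · have := harc 1 (by norm_num); rwa [h1] at this
  · refine Or.inr (Or.inr (Or.inr ⟨f 1, f 2, ?_, ?_, ?_⟩))
    · have := harc 0 (by norm_num); rwa [h0] at this
    · exact harc 1 (by norm_num)
    · have := harc 2 (by norm_num); rwa [h1] at this

lemma kreach_map {V V' : Type*} {A : V → V → Prop} {B : V' → V' → Prop} (g : V → V')
    (hg : ∀ a b, A a b → B (g a) (g b)) {k : ℕ} {x y : V} (h : KReach A k x y) :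
    KReach B k (g x) (g y) := by
  obtain ⟨n, hn, f, h0, h1, harc⟩ := h
  exact ⟨n, hn, g ∘ f, by simp [h0], by simp [h1], fun i hi => hg _ _ (harc i hi)⟩

/-! ### 2-kings in semicomplete digraphs -/

lemma exists_2king {V : Type*} [Fintype V] [Nonempty V] {A : V → V → Prop}
    (hirr : Irreflexive A) (hsemi : Semicomplete A) : ∃ k : V, IsKKing A 2 k := by
  classical
  obtain ⟨k, -, hmax⟩ := Finset.exists_max_image (Finset.univ : Finset V)
    (fun v => (Finset.univ.filter (fun y => A v y)).card) ⟨Classical.arbitrary V, Finset.mem_univ _⟩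
  refine ⟨k, fun y => ?_⟩
  rcases eq_or_ne y k with rfl | hne
  · exact kreach_refl _
  by_cases hky : A k y
  · exact kreach_one hky (by norm_num)
  by_cases hp : ∃ p, A k p ∧ A p y
  · obtain ⟨p, h1, h2⟩ := hp
    exact kreach_two h1 h2 (le_refl 2)
  exfalso
  push_neg at hp
  have hyk : A y k := (hsemi y k hne).resolve_right hky
  have hsub : insert k (Finset.univ.filter (fun p => A k p)) ⊆
      Finset.univ.filter (fun p => A y p) := by
    intro p hpmem
    rcases Finset.mem_insert.mp hpmem with rfl | hpf
    · simpa using hyk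
    · have hkp : A k p := (Finset.mem_filter.mp hpf).2
      have hpy : p ≠ y := fun h => hky (h ▸ hkp)
      have : A y p := (hsemi p y hpy).resolve_left (hp p hkp)
      simpa using this
  have hnotmem : k ∉ Finset.univ.filter (fun p => A k p) := by
    simp [hirr k]
  have hcard : (Finset.univ.filter (fun p => A k p)).card + 1 ≤
      (Finset.univ.filter (fun p => A y p)).card := by
    rw [← Finset.card_insert_of_notMem hnotmem]
    exact Finset.card_le_card hsub
  have := hmax y (Finset.mem_univ y)
  omega

lemma exists_dominating_2king {V : Type*} [Fintype V] {A : V → V → Prop}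
    (hirr : Irreflexive A) (hsemi : Semicomplete A) (j : V) :
    ∃ k : V, IsKKing A 2 k ∧ (k = j ∨ A k j) := by
  classical
  by_cases hin : ∃ y, A y j
  · haveI : Nonempty {y : V // A y j} := ⟨⟨hin.choose, hin.choose_spec⟩⟩
    obtain ⟨k, hk⟩ := exists_2king (V := {y : V // A y j}) (A := fun a b => A a.1 b.1)
      (fun a => hirr a.1) (fun a b hab => hsemi a.1 b.1 (fun h => hab (Subtype.ext h)))
    refine ⟨k.1, fun y => ?_, Or.inr k.2⟩
    rcases eq_or_ne y k.1 with rfl | hne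
    · exact kreach_refl _
    by_cases hyj : A y j
    · exact kreach_map Subtype.val (fun a b h => h) (hk ⟨y, hyj⟩)
    rcases eq_or_ne y j with rfl | hne2
    · exact kreach_one k.2 (by norm_num)
    · have hjy : A j y := (hsemi j y (Ne.symm hne2)).resolve_right hyj
      exact kreach_two k.2 hjy (le_refl 2)
  · refine ⟨j, fun y => ?_, Or.inl rfl⟩
    rcases eq_or_ne y j with rfl | hne
    · exact kreach_refl _
    have : A j y := (hsemi j y (Ne.symm hne)).resolve_right (fun h => hin ⟨y, h⟩)
    exact kreach_one this (by norm_num)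

/-- Cover lemma: every vertex is a strict 3-king or dominated by one. -/
lemma strict_king_cover {V : Type*} [Fintype V] {A : V → V → Prop}
    (hirr : Irreflexive A) (hsemi : Semicomplete A)
    (hdom : ∀ u : V, IsKKing A 2 u → ∃ w : V, IsStrictKKing A 3 w ∧ A w u) (j : V) :
    ∃ s : V, IsStrictKKing A 3 s ∧ (s = j ∨ A s j) := by
  by_contra hcon
  push_neg at hcon
  have hJS : ∀ s : V, IsStrictKKing A 3 s → A j s := by
    intro s hs
    obtain ⟨hne, hnAT⟩ := hcon s hs
    exact (hsemi s j hne).resolve_left hnAT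
  have hking3 : IsKKing A 3 j := by
    intro v
    obtain ⟨k, hk2, hkv⟩ := exists_dominating_2king hirr hsemi v
    obtain ⟨s, hs, hsk⟩ := hdom k hk2
    have hjs : A j s := hJS s hs
    rcases hkv with rfl | hkv
    · exact kreach_two hjs hsk (by norm_num)
    · exact kreach_three hjs hsk hkv (le_refl 3)
  have hnot2 : ¬ IsKKing A 2 j := by
    intro h2
    obtain ⟨s, hs, hsj⟩ := hdom j h2
    exact (hcon s hs).2 hsj
  have hstrictj : IsStrictKKing A 3 j := by
    refine ⟨hking3, ?_⟩
    by_contra hy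
    push_neg at hy
    exact hnot2 (fun y => hy y)
  exact (hcon j hstrictj).1 rfl

/-- Blocker lemma: every strict 3-king has a vertex outside its 2-ball that is not
a strict 3-king. -/
lemma strict_king_blocker {V : Type*} [Fintype V] {A : V → V → Prop}
    (hirr : Irreflexive A) (hsemi : Semicomplete A) {s : V} (hs : IsStrictKKing A 3 s) :
    ∃ m : V, ¬ KReach A 2 s m ∧ ¬ IsStrictKKing A 3 m := by
  classical
  by_contra hcon
  push_neg at hcon
  haveI : Nonempty {m : V // ¬ KReach A 2 s m} := by
    obtain ⟨y, hy⟩ := hs.2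
    exact ⟨⟨y, hy⟩⟩
  obtain ⟨mk, hmk⟩ := exists_2king (V := {m : V // ¬ KReach A 2 s m})
    (A := fun a b => A a.1 b.1) (fun a => hirr a.1)
    (fun a b hab => hsemi a.1 b.1 (fun h => hab (Subtype.ext h)))
  have hmstrict : IsStrictKKing A 3 mk.1 := hcon mk.1 mk.2
  obtain ⟨-, y, hy⟩ := hmstrict
  have hms : ¬ KReach A 2 s mk.1 := mk.2
  -- mk dominates the closed out-neighborhood of s
  have hstep : ∀ p : V, (p = s ∨ A s p) → A mk.1 p := by
    intro p hp
    rcases hp with rfl | hsp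
    · have hne : mk.1 ≠ p := by
        intro h
        exact hms (by rw [h]; exact kreach_refl _)
      refine (hsemi mk.1 p hne).resolve_right ?_
      intro hpm
      exact hms (kreach_one hpm (by norm_num))
    · have hne : mk.1 ≠ p := by
        intro h
        exact hms (by rw [h]; exact kreach_one hsp (by norm_num))
      refine (hsemi mk.1 p hne).resolve_right ?_
      intro hpm
      exact hms (kreach_two hsp hpm (le_refl 2))
  -- y is also outside the 2-ball of s
  have hymem : ¬ KReach A 2 s y := by
    intro hk
    rcases kreach_le2_cases hk with rfl | hsy | ⟨a, hsa, hay⟩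
    · exact hy (kreach_one (hstep _ (Or.inl rfl)) (by norm_num))
    · exact hy (kreach_one (hstep y (Or.inr hsy)) (by norm_num))
    · exact hy (kreach_two (hstep a (Or.inr hsa)) hay (le_refl 2))
  exact hy (kreach_map Subtype.val (fun a b h => h) (hmk ⟨y, hymem⟩))

/-! ### The extension construction -/

/-- Outer digraph of the extension: add one hub index per strict 3-king of `AT`. -/
def extT {ι : Type} (AT : ι → ι → Prop) :
    ι ⊕ {u : ι // IsStrictKKing AT 3 u} → ι ⊕ {u : ι // IsStrictKKing AT 3 u} → Prop
  | Sum.inl i, Sum.inl j => AT i j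
  | Sum.inl _, Sum.inr _ => True
  | Sum.inr s, Sum.inl j => j = s.val
  | Sum.inr s, Sum.inr t => AT s.val t.val

/-- The extension of `AQ`: each hub is a new singleton fiber. -/
def extQ {ι W : Type} (AT : ι → ι → Prop) (AQ : W → W → Prop) (π : W → ι) :
    W ⊕ {u : ι // IsStrictKKing AT 3 u} → W ⊕ {u : ι // IsStrictKKing AT 3 u} → Prop
  | Sum.inl x, Sum.inl y => AQ x y
  | Sum.inl _, Sum.inr _ => True
  | Sum.inr s, Sum.inl y => π y = s.val
  | Sum.inr s, Sum.inr t => AT s.val t.val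

end KingAux

/-- If `T` has a strict 3-king and every 2-king of `T` is dominated by some strict
3-king of `T`, then the strong semicomplete composition `Q` can be established:
there is a semicomplete composition `Q'` containing `Q` as an induced subdigraph
whose set of 3-kings is exactly `V(Q)`. -/
theorem stmt12 {ι W : Type} [Fintype ι] [Fintype W]
    (AT : ι → ι → Prop) (AQ : W → W → Prop) (π : W → ι)
    (hcard : 2 ≤ Fintype.card ι)
    (hTirr : Irreflexive AT) (hQirr : Irreflexive AQ)
    (hsemi : Semicomplete AT) (hcomp : IsComposition AT AQ π)
    (hstrong : Strong AQ)
    (hstrict : ∃ u : ι, IsStrictKKing AT 3 u)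
    (hdom : ∀ u : ι, IsKKing AT 2 u → ∃ w : ι, IsStrictKKing AT 3 w ∧ AT w u) :
    ∃ (W' : Type) (_ : Fintype W') (ι' : Type) (AT' : ι' → ι' → Prop)
      (AQ' : W' → W' → Prop) (π' : W' → ι') (e : W → W'),
      Function.Injective e ∧ Semicomplete AT' ∧ IsComposition AT' AQ' π' ∧
      (∀ x y : W, AQ x y ↔ AQ' (e x) (e y)) ∧
      (∀ w' : W', IsKKing AQ' 3 w' ↔ w' ∈ Set.range e) := by
  classical
  set S := {u : ι // IsStrictKKing AT 3 u} with hS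
  refine ⟨W ⊕ S, Fintype.ofFinite _, ι ⊕ S, extT AT, extQ AT AQ π, Sum.map π id, Sum.inl,
    Sum.inl_injective, ?_, ?_, ?_, ?_⟩
  · -- Semicomplete extT
    rintro (i | s) (j | t) hne
    · exact hsemi i j (fun h => hne (by rw [h]))
    · exact Or.inl trivial
    · exact Or.inr trivial
    · have hst : s.val ≠ t.val := fun h => hne (by rw [Subtype.ext h])
      exact hsemi s.val t.val hst
  · -- IsComposition
    refine ⟨?_, ?_⟩
    · rintro (i | s)
      · obtain ⟨w, hw⟩ := hcomp.surj i
        exact ⟨Sum.inl w, by simp [hw]⟩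
      · exact ⟨Sum.inr s, rfl⟩
    · rintro (x | s) (y | t) hne
      · have hxy : π x ≠ π y := by
          intro h
          exact hne (by simp [h])
        exact hcomp.cross x y hxy
      · simp [extQ, extT]
      · simp [extQ, extT]
      · simp [extQ, extT]
  · -- arcs preserved
    intro x y
    exact Iff.rfl
  · -- kings are exactly the old vertices
    rintro (x | s)
    · constructor
      · intro _
        exact ⟨x, rfl⟩
      intro _
      intro v
      rcases v with y | t
      · -- reach an old vertex
        rcases eq_or_ne x y with rfl | hxy
        · exact kreach_refl _
        obtain ⟨s, hs, hcov⟩ := strict_king_cover hTirr hsemi hdom (π y)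
        rcases hcov with hsy | hsy
        · refine kreach_two (A := extQ AT AQ π) (x := Sum.inl x) (a := Sum.inr ⟨s, hs⟩)
            (y := Sum.inl y) trivial ?_ (by norm_num)
          exact hsy.symm
        · obtain ⟨w, hw⟩ := hcomp.surj s
          have hne : π w ≠ π y := by
            rw [hw]
            intro h
            rw [h] at hsy
            exact hTirr _ hsy
          have harc : AQ w y := (hcomp.cross w y hne).mpr (by rw [hw]; exact hsy)
          exact kreach_three (A := extQ AT AQ π) (x := Sum.inl x) (a := Sum.inr ⟨s, hs⟩)
            (b := Sum.inl w) (y := Sum.inl y) trivial hw harc (le_refl 3)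
      · -- reach a hub
        exact kreach_one (A := extQ AT AQ π) (x := Sum.inl x) (y := Sum.inr t) trivial
          (by norm_num)
    · constructor
      · -- hubs are not 3-kings
        intro hk
        exfalso
        obtain ⟨m, hm2, hmS⟩ := strict_king_blocker hTirr hsemi s.2
        obtain ⟨z, hz⟩ := hcomp.surj m
        have hreach := hk (Sum.inl z)
        rcases kreach_le3_cases hreach with habs | h1 | ⟨a, ha1, ha2⟩ | ⟨a, b, ha1, ha2, ha3⟩
        · exact absurd habs (by simp)
        · -- length 1 : fiber of z is the fiber of s
          have hzs : m = s.val := by rw [← hz]; exact h1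
          exact hm2 (by rw [hzs]; exact kreach_refl _)
        · -- length 2
          rcases a with y | t
          · have hy : π y = s.val := ha1
            have haq : AQ y z := ha2
            rcases eq_or_ne (π y) (π z) with heq | hne
            · have hzs : m = s.val := by rw [← hz, ← heq, hy]
              exact hm2 (by rw [hzs]; exact kreach_refl _)
            · have hAT := (hcomp.cross y z hne).mp haq
              rw [hy, hz] at hAT
              exact hm2 (kreach_one hAT (by norm_num))
          · have hzt : m = t.val := by rw [← hz]; exact ha2
            exact hmS (by rw [hzt]; exact t.2)
        · -- length 3
          rcases b with y' | t'
          · -- last inner vertex is old; its fiber is 1-reachable from s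
            have hy' : KReach AT 1 s.val (π y') := by
              rcases a with y | t
              · have hys : π y = s.val := ha1
                have haq : AQ y y' := ha2
                rcases eq_or_ne (π y) (π y') with heq | hne
                · rw [← heq, hys]
                  exact kreach_refl _
                · have hAT := (hcomp.cross y y' hne).mp haq
                  rw [hys] at hAT
                  exact kreach_one hAT (le_refl 1)
              · have hst : AT s.val t.val := ha1
                have hyt : π y' = t.val := ha2
                rw [hyt]
                exact kreach_one hst (le_refl 1)
            have haq : AQ y' z := ha3
            rcases eq_or_ne (π y') (π z) with heq | hne
            · -- z is in the same fiber as y'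
              have hym : KReach AT 1 s.val m := by rw [← hz, ← heq]; exact hy'
              obtain ⟨n, hn, f, h0, h1, harc⟩ := hym
              exact hm2 ⟨n, by omega, f, h0, h1, harc⟩
            · have harc2 := (hcomp.cross y' z hne).mp haq
              rw [hz] at harc2
              obtain ⟨n, hn, f, h0, h1, harc⟩ := hy'
              interval_cases n
              · rw [← h0.symm.trans h1] at harc2
                exact hm2 (kreach_one harc2 (by norm_num))
              · have hstep := harc 0 (by norm_num)
                rw [h0, h1] at hstep
                exact hm2 (kreach_two hstep harc2 (le_refl 2))
          · -- last inner vertex is a hub: z is in a strict king's fiber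
            have hzt : m = t'.val := by rw [← hz]; exact ha3
            exact hmS (by rw [hzt]; exact t'.2)
      · -- hubs are not in the range of the embedding
        rintro ⟨x, hx⟩
        exact absurd hx (by simp)
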